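/- Run signSGD with constant learning rate δ = 1/√(‖L‖₁ K) and mini-batch size n = K for K iterations, starting at x₀ with objective gap f₀ − f* where f ≥ f* is lower bounded, f satisfies coordinate-wise L-smoothness, and the stochastic gradient oracle is unbiased with coordinate-wise variances σᵢ². Then (E[(1/K)Σ_{k<K} ‖g_k‖₁])² ≤ (1/√N)[√(‖L‖₁)(f₀ − f* + 1/2) + 2‖σ‖₁]², where N = K² is the total number of stochastic gradient calls and g_k = ∇f(x_k). -/

import Mathlib

open MeasureTheory ProbabilityTheory

lemma sign_ineq (a b : ℝ) : |a| - a * Real.sign b ≤ 2 * |b - a| := by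
  rcases lt_trichotomy b 0 with hb | hb | hb
  · rw [Real.sign_of_neg hb]
    rcases abs_cases a with ⟨h1,h2⟩|⟨h1,h2⟩ <;> rcases abs_cases (b-a) with ⟨h3,h4⟩|⟨h3,h4⟩ <;> nlinarith
  · subst hb; simp only [Real.sign_zero, mul_zero, sub_zero, zero_sub, abs_neg]
    nlinarith [abs_nonneg a]
  · rw [Real.sign_of_pos hb]
    rcases abs_cases a with ⟨h1,h2⟩|⟨h1,h2⟩ <;> rcases abs_cases (b-a) with ⟨h3,h4⟩|⟨h3,h4⟩ <;> nlinarith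

lemma sign_sq_le (b : ℝ) : Real.sign b ^ 2 ≤ 1 := by
  rcases lt_trichotomy b 0 with hb | hb | hb
  · rw [Real.sign_of_neg hb]; norm_num
  · subst hb; simp
  · rw [Real.sign_of_pos hb]; norm_num

lemma integral_abs_le_of_sq {Ω : Type*} [MeasureSpace Ω] [IsProbabilityMeasure (ℙ : Measure Ω)]
    {Y : Ω → ℝ} {b : ℝ} (hb : 0 ≤ b) (hY : Integrable Y ℙ)
    (hY2 : Integrable (fun ω : Ω => Y ω ^ 2) ℙ) (h : ∫ ω, Y ω ^ 2 ∂(ℙ : Measure Ω) ≤ b ^ 2) :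
    ∫ ω : Ω, |Y ω| ∂(ℙ : Measure Ω) ≤ b := by
  rcases eq_or_lt_of_le hb with rfl | hb
  · have h0 : ∫ ω, Y ω ^ 2 ∂(ℙ : Measure Ω) = 0 := le_antisymm (by simpa using h)
      (integral_nonneg fun ω => sq_nonneg _)
    have hz : ∀ᵐ ω ∂(ℙ : Measure Ω), Y ω ^ 2 = 0 := by
      have := (integral_eq_zero_iff_of_nonneg (fun ω => sq_nonneg (Y ω)) hY2).mp h0
      filter_upwards [this] with ω hω using hω
    have hz' : ∀ᵐ ω ∂(ℙ : Measure Ω), |Y ω| = (fun _ : Ω => (0:ℝ)) ω := by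
      filter_upwards [hz] with ω hω
      simpa [abs_eq_zero] using pow_eq_zero_iff (n := 2) (by norm_num) |>.mp hω
    rw [integral_congr_ae hz']; simp
  · have hpt : ∀ ω, |Y ω| ≤ (Y ω ^ 2 / b + b) / 2 := by
      intro ω
      have h1 := sq_nonneg (|Y ω| - b)
      have h2 : Y ω ^ 2 = |Y ω| ^ 2 := (sq_abs _).symm
      rw [div_add' _ _ _ hb.ne', le_div_iff₀ (by positivity : (0:ℝ) < 2), le_div_iff₀ hb]
      nlinarith
    have hle : ∫ ω : Ω, |Y ω| ∂(ℙ : Measure Ω) ≤ ∫ ω : Ω, (Y ω ^ 2 / b + b) / 2 ∂(ℙ : Measure Ω) := by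
      apply integral_mono hY.abs _ hpt
      exact ((hY2.div_const b).add (integrable_const b)).div_const 2
    have e1 : ∫ ω : Ω, (Y ω ^ 2 / b + b) / 2 ∂(ℙ : Measure Ω)
        = ((∫ ω : Ω, Y ω ^ 2 ∂(ℙ : Measure Ω)) / b + b) / 2 := by
      rw [integral_div, integral_add (hY2.div_const b) (integrable_const b),
        integral_div, integral_const]
      simp
    rw [e1] at hle
    have h3 : (∫ ω : Ω, Y ω ^ 2 ∂(ℙ : Measure Ω)) / b ≤ b := by
      rw [div_le_iff₀ hb]; nlinarith
    linarith

theorem signSGD_nonconvex_convergence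
    {Ω : Type*} [MeasureSpace Ω] [IsProbabilityMeasure (ℙ : Measure Ω)]
    {d K : ℕ} (hd : 0 < d) (hK : 0 < K)
    (f : (Fin d → ℝ) → ℝ) (g : (Fin d → ℝ) → (Fin d → ℝ))
    (L σv : Fin d → ℝ) (fstar : ℝ)
    (hL : ∀ i, 0 ≤ L i) (hLpos : 0 < ∑ i, L i) (hσ : ∀ i, 0 ≤ σv i)
    -- Assumption 1: lower bound
    (hlower : ∀ x, fstar ≤ f x)
    -- Assumption 2: coordinate-wise smoothness
    (hsmooth : ∀ x y : Fin d → ℝ,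
      |f y - (f x + ∑ i, g x i * (y i - x i))| ≤ (1 / 2) * ∑ i, L i * (y i - x i) ^ 2)
    -- the iterates and the mini-batched stochastic gradients
    (X : ℕ → Ω → (Fin d → ℝ)) (gt : ℕ → Ω → (Fin d → ℝ))
    (x0 : Fin d → ℝ) (hX0 : ∀ ω, X 0 ω = x0)
    (hXmeas : ∀ k, Measurable (X k)) (hgtmeas : ∀ k, Measurable (gt k))
    -- signSGD update with learning rate δ = 1/√(‖L‖₁ K)
    (δ : ℝ) (hδ : δ = 1 / Real.sqrt ((∑ i, L i) * K))
    (hupdate : ∀ k ω i, X (k + 1) ω i = X k ω i - δ * Real.sign (gt k ω i))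
    -- Assumption 3: the mini-batch (size K) gradient oracle is conditionally
    -- unbiased with coordinate-wise variance bounded by σᵢ²/K
    (hint : ∀ k i, Integrable (fun ω => gt k ω i) ℙ)
    (hint2 : ∀ k i, Integrable (fun ω => (gt k ω i - g (X k ω) i) ^ 2) ℙ)
    (hunbiased : ∀ k i,
      MeasureTheory.condExp (MeasurableSpace.comap (X k) inferInstance) ℙ
          (fun ω => gt k ω i) =ᵐ[ℙ] fun ω => g (X k ω) i)
    (hvar : ∀ k i, ∀ᵐ ω ∂ℙ,
      MeasureTheory.condExp (MeasurableSpace.comap (X k) inferInstance) ℙ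
          (fun ω' => (gt k ω' i - g (X k ω') i) ^ 2) ω ≤ σv i ^ 2 / K) :
    (∫ ω, (1 / K : ℝ) * ∑ k ∈ Finset.range K, ∑ i, |g (X k ω) i| ∂ℙ) ^ 2 ≤
      (1 / Real.sqrt ((K : ℝ) ^ 2)) *
        (Real.sqrt (∑ i, L i) * (f x0 - fstar + 1 / 2) + 2 * ∑ i, σv i) ^ 2 := by
  set Λ : ℝ := ∑ i, L i with hΛ
  have hKpos : (0:ℝ) < K := by exact_mod_cast hK
  have hsK : 0 < Real.sqrt K := Real.sqrt_pos.mpr hKpos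
  have hδpos : 0 < δ := by
    rw [hδ]; positivity
  -- integrability of g (X k ·) i
  have hgint : ∀ k i, Integrable (fun ω => g (X k ω) i) ℙ := fun k i =>
    (integrable_condExp).congr (hunbiased k i)
  have hdiffint : ∀ k i, Integrable (fun ω => gt k ω i - g (X k ω) i) ℙ := fun k i =>
    (hint k i).sub (hgint k i)
  -- variance bound on integrals
  have hsq : ∀ k i, ∫ ω, (gt k ω i - g (X k ω) i) ^ 2 ∂(ℙ : Measure Ω) ≤ σv i ^ 2 / K := by
    intro k i
    have hm : MeasurableSpace.comap (X k) inferInstance ≤ (by infer_instance : MeasurableSpace Ω) :=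
      (hXmeas k).comap_le
    haveI : SigmaFinite ((ℙ : Measure Ω).trim hm) := by
      have : IsFiniteMeasure ((ℙ : Measure Ω).trim hm) := isFiniteMeasure_trim hm
      infer_instance
    rw [← integral_condExp hm (f := fun ω => (gt k ω i - g (X k ω) i) ^ 2)]
    calc ∫ ω, (condExp (MeasurableSpace.comap (X k) inferInstance) ℙ
          (fun ω' => (gt k ω' i - g (X k ω') i) ^ 2)) ω ∂(ℙ : Measure Ω)
        ≤ ∫ _ω, σv i ^ 2 / K ∂(ℙ : Measure Ω) :=
          integral_mono_ae integrable_condExp (integrable_const _) (hvar k i)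
      _ = σv i ^ 2 / K := by simp
  have habs : ∀ k i, ∫ ω, |gt k ω i - g (X k ω) i| ∂(ℙ : Measure Ω) ≤ σv i / Real.sqrt K := by
    intro k i
    refine integral_abs_le_of_sq (div_nonneg (hσ i) hsK.le) (hdiffint k i) (hint2 k i) ?_
    have : (σv i / Real.sqrt K) ^ 2 = σv i ^ 2 / K := by
      rw [div_pow, Real.sq_sqrt hKpos.le]
    rw [this]; exact hsq k i
  -- pointwise descent per step
  have step : ∀ ω k, f (X (k+1) ω) - f (X k ω) ≤
      -(δ * ∑ i, |g (X k ω) i|) + 2 * δ * ∑ i, |gt k ω i - g (X k ω) i| + δ^2 * Λ / 2 := by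
    intro ω k
    have hs := (abs_le.mp (hsmooth (X k ω) (X (k+1) ω))).2
    have hΔ : ∀ i, X (k+1) ω i - X k ω i = -(δ * Real.sign (gt k ω i)) := by
      intro i; rw [hupdate k ω i]; ring
    have b1 : ∑ i, L i * (X (k+1) ω i - X k ω i) ^ 2 ≤ δ^2 * Λ := by
      have : ∀ i ∈ Finset.univ, L i * (X (k+1) ω i - X k ω i) ^ 2 ≤ L i * δ^2 := by
        intro i _
        rw [hΔ i]
        have hsq1 := sign_sq_le (gt k ω i)
        have hLi := hL i
        have he : (-(δ * Real.sign (gt k ω i)))^2 = δ^2 * Real.sign (gt k ω i)^2 := by ring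
        rw [he]
        nlinarith [mul_nonneg (mul_nonneg hLi (sq_nonneg δ)) (sub_nonneg.mpr hsq1)]
      refine (Finset.sum_le_sum this).trans (le_of_eq ?_)
      rw [← Finset.sum_mul, hΛ]; ring
    have b2 : ∑ i, g (X k ω) i * (X (k+1) ω i - X k ω i) ≤
        -(δ * ∑ i, |g (X k ω) i|) + 2 * δ * ∑ i, |gt k ω i - g (X k ω) i| := by
      have hterm : ∀ i ∈ Finset.univ, g (X k ω) i * (X (k+1) ω i - X k ω i) ≤
          -(δ * |g (X k ω) i|) + 2 * δ * |gt k ω i - g (X k ω) i| := by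
        intro i _
        rw [hΔ i]
        have h1 := sign_ineq (g (X k ω) i) (gt k ω i)
        nlinarith [hδpos.le]
      refine (Finset.sum_le_sum hterm).trans (le_of_eq ?_)
      rw [Finset.sum_add_distrib, Finset.sum_neg_distrib, ← Finset.mul_sum, ← Finset.mul_sum]
    nlinarith [hs, b1, b2]
  -- telescoped pointwise bound
  have ptwise : ∀ ω, (1 / K : ℝ) * ∑ k ∈ Finset.range K, ∑ i, |g (X k ω) i| ≤
      ((f x0 - fstar) / (K * δ) + δ * Λ / 2)
        + (2 / K) * ∑ k ∈ Finset.range K, ∑ i, |gt k ω i - g (X k ω) i| := by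
    intro ω
    set S := ∑ k ∈ Finset.range K, ∑ i, |g (X k ω) i| with hS
    set E := ∑ k ∈ Finset.range K, ∑ i, |gt k ω i - g (X k ω) i| with hE
    have tele : ∑ k ∈ Finset.range K, (f (X (k+1) ω) - f (X k ω)) = f (X K ω) - f (X 0 ω) :=
      Finset.sum_range_sub (fun k => f (X k ω)) K
    have hsumstep : f (X K ω) - f (X 0 ω) ≤
        -(δ * S) + 2 * δ * E + K * (δ^2 * Λ / 2) := by
      rw [← tele]
      calc ∑ k ∈ Finset.range K, (f (X (k+1) ω) - f (X k ω))
          ≤ ∑ k ∈ Finset.range K, (-(δ * ∑ i, |g (X k ω) i|)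
              + 2 * δ * ∑ i, |gt k ω i - g (X k ω) i| + δ^2 * Λ / 2) :=
            Finset.sum_le_sum fun k _ => step ω k
        _ = -(δ * S) + 2 * δ * E + K * (δ^2 * Λ / 2) := by
            rw [Finset.sum_add_distrib, Finset.sum_add_distrib, Finset.sum_neg_distrib,
              ← Finset.mul_sum, ← Finset.mul_sum, Finset.sum_const, Finset.card_range,
              nsmul_eq_mul]
    have hδS : δ * S ≤ (f x0 - fstar) + 2 * δ * E + K * (δ^2 * Λ / 2) := by
      have h1 : fstar ≤ f (X K ω) := hlower _
      have h2 : f (X 0 ω) = f x0 := by rw [hX0]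
      linarith
    have h1 : (1/K:ℝ) * S ≤ (1/K:ℝ) * (((f x0 - fstar) + 2 * δ * E + K * (δ^2 * Λ / 2)) / δ) := by
      apply mul_le_mul_of_nonneg_left _ (by positivity)
      rw [le_div_iff₀ hδpos]
      linarith [hδS]
    refine h1.trans (le_of_eq ?_)
    field_simp
    ring
  -- integrate
  have hleft_int : Integrable (fun ω => (1 / K : ℝ) * ∑ k ∈ Finset.range K, ∑ i, |g (X k ω) i|) ℙ := by
    apply Integrable.const_mul
    exact integrable_finset_sum _ fun k _ => integrable_finset_sum _ fun i _ => (hgint k i).abs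
  have hright_int : Integrable (fun ω => ((f x0 - fstar) / (K * δ) + δ * Λ / 2)
        + (2 / K) * ∑ k ∈ Finset.range K, ∑ i, |gt k ω i - g (X k ω) i|) ℙ := by
    apply (integrable_const _).add
    apply Integrable.const_mul
    exact integrable_finset_sum _ fun k _ => integrable_finset_sum _ fun i _ => (hdiffint k i).abs
  have hmain : (∫ ω, (1 / K : ℝ) * ∑ k ∈ Finset.range K, ∑ i, |g (X k ω) i| ∂(ℙ : Measure Ω)) ≤
      ((f x0 - fstar) / (K * δ) + δ * Λ / 2) + (2 / Real.sqrt K) * ∑ i, σv i := by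
    refine (integral_mono hleft_int hright_int ptwise).trans ?_
    rw [integral_add (integrable_const _) (Integrable.const_mul
      (integrable_finset_sum _ fun k _ => integrable_finset_sum _ fun i _ => (hdiffint k i).abs) _),
      integral_const]
    simp only [probReal_univ, one_smul]
    gcongr
    rw [integral_const_mul, integral_finset_sum _ (fun k _ => integrable_finset_sum _ fun i _ => (hdiffint k i).abs)]
    have hsum : ∑ k ∈ Finset.range K, (∫ ω, ∑ i, |gt k ω i - g (X k ω) i| ∂(ℙ : Measure Ω)) ≤
        ∑ k ∈ Finset.range K, ∑ i, σv i / Real.sqrt K := by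
      refine Finset.sum_le_sum fun k _ => ?_
      rw [integral_finset_sum _ fun i _ => (hdiffint k i).abs]
      exact Finset.sum_le_sum fun i _ => habs k i
    have hsum2 : ∑ k ∈ Finset.range K, ∑ i, σv i / Real.sqrt K = (K:ℝ) * ((∑ i, σv i) / Real.sqrt K) := by
      rw [Finset.sum_const, Finset.card_range, nsmul_eq_mul, Finset.sum_div]
    have h2 : (2 / K : ℝ) * ∑ k ∈ Finset.range K, (∫ ω, ∑ i, |gt k ω i - g (X k ω) i| ∂(ℙ : Measure Ω))
        ≤ (2 / K : ℝ) * ((K:ℝ) * ((∑ i, σv i) / Real.sqrt K)) := by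
      apply mul_le_mul_of_nonneg_left _ (by positivity)
      rw [hsum2] at hsum; exact hsum
    refine h2.trans (le_of_eq ?_)
    field_simp
  -- arithmetic finish
  have hI0 : 0 ≤ ∫ ω, (1 / K : ℝ) * ∑ k ∈ Finset.range K, ∑ i, |g (X k ω) i| ∂(ℙ : Measure Ω) :=
    integral_nonneg fun ω => by positivity
  set a := Real.sqrt Λ with ha
  set b := Real.sqrt K with hb
  have hapos : 0 < a := Real.sqrt_pos.mpr hLpos
  have ha2 : a^2 = Λ := Real.sq_sqrt hLpos.le
  have hb2 : b^2 = (K:ℝ) := Real.sq_sqrt hKpos.le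
  have hab : Real.sqrt (Λ * K) = a * b := Real.sqrt_mul hLpos.le _
  have hRHSeq : (f x0 - fstar) / (K * δ) + δ * Λ / 2 + (2 / b) * ∑ i, σv i
      = (1 / b) * (a * (f x0 - fstar + 1 / 2) + 2 * ∑ i, σv i) := by
    rw [hδ, hab, ← ha2, ← hb2]
    field_simp
  have hfinal : (∫ ω, (1 / K : ℝ) * ∑ k ∈ Finset.range K, ∑ i, |g (X k ω) i| ∂(ℙ : Measure Ω)) ≤
      (1 / b) * (a * (f x0 - fstar + 1 / 2) + 2 * ∑ i, σv i) := by
    rw [← hRHSeq]; exact hmain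
  have hC0 : 0 ≤ (1 / b) * (a * (f x0 - fstar + 1 / 2) + 2 * ∑ i, σv i) := by
    have h1 : fstar ≤ f x0 := hlower x0
    have h2 : 0 ≤ ∑ i, σv i := Finset.sum_nonneg fun i _ => hσ i
    have h3 : 0 ≤ a * (f x0 - fstar + 1 / 2) := mul_nonneg hapos.le (by linarith)
    have hbpos : 0 < b := hsK
    positivity
  have hsq2 := pow_le_pow_left₀ hI0 hfinal 2
  refine hsq2.trans (le_of_eq ?_)
  rw [Real.sqrt_sq hKpos.le, mul_pow, div_pow, one_pow, hb2]
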